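/- arXiv:2003.01600 — 4 statements merged into one kernel-verified Lean document; each statement's English description precedes it below -/
import Mathlib

section
/- Let p be a prime, A an elementary abelian group of order p² acting on a finite group R of order prime to p. Then R is generated by the fixed-point subgroups of the nontrivial elements of A: R = ⟨C_R(a) : a ∈ A, a ≠ 1⟩. -/
open Subgroup Pointwise

universe u

section Aux
variable {A Q : Type*} [Group A] [Group Q]

/-- Restrict a homomorphic action by automorphisms to an invariant subgroup. -/
def autRestrict (ψ : A →* MulAut Q) (N : Subgroup Q)
    (h : ∀ (c : A), ∀ x ∈ N, ψ c x ∈ N) : A →* MulAut N where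
  toFun c :=
    { toFun := fun x => ⟨ψ c x, h c x x.2⟩
      invFun := fun x => ⟨ψ c⁻¹ x, h c⁻¹ x x.2⟩
      left_inv := fun x => Subtype.ext (show ψ c⁻¹ (ψ c x) = x by
        rw [← MulAut.mul_apply, ← map_mul, inv_mul_cancel, map_one, MulAut.one_apply])
      right_inv := fun x => Subtype.ext (show ψ c (ψ c⁻¹ x) = x by
        rw [← MulAut.mul_apply, ← map_mul, mul_inv_cancel, map_one, MulAut.one_apply])
      map_mul' := fun x y => Subtype.ext (by simp) }
  map_one' := by ext x; simp
  map_mul' c d := by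
    ext x
    show ψ (c * d) x = ψ c (ψ d x)
    rw [map_mul, MulAut.mul_apply]

@[simp] lemma autRestrict_apply (ψ : A →* MulAut Q) (N : Subgroup Q)
    (h : ∀ (c : A), ∀ x ∈ N, ψ c x ∈ N) (c : A) (x : N) :
    (autRestrict ψ N h c x : Q) = ψ c x := rfl

lemma map_eq_of_inv (ψ : A →* MulAut Q) (N : Subgroup Q)
    (h : ∀ (c : A), ∀ x ∈ N, ψ c x ∈ N) (c : A) : N.map (ψ c).toMonoidHom = N := by
  apply le_antisymm
  · rintro y ⟨x, hx, rfl⟩; exact h c x hx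
  · intro x hx
    exact ⟨ψ c⁻¹ x, h c⁻¹ x hx, show ψ c (ψ c⁻¹ x) = x by
      rw [← MulAut.mul_apply, ← map_mul, mul_inv_cancel, map_one, MulAut.one_apply]⟩

/-- Induced action on the quotient by an invariant normal subgroup. -/
def autQuot (ψ : A →* MulAut Q) (N : Subgroup Q) [N.Normal]
    (h : ∀ (c : A), ∀ x ∈ N, ψ c x ∈ N) : A →* MulAut (Q ⧸ N) where
  toFun c := QuotientGroup.congr N N (ψ c) (map_eq_of_inv ψ N h c)
  map_one' := by
    ext x
    induction x using QuotientGroup.induction_on with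
    | _ z => simp [QuotientGroup.congr]
  map_mul' c d := by
    ext x
    induction x using QuotientGroup.induction_on with
    | _ z => simp [QuotientGroup.congr]

@[simp] lemma autQuot_apply (ψ : A →* MulAut Q) (N : Subgroup Q) [N.Normal]
    (h : ∀ (c : A), ∀ x ∈ N, ψ c x ∈ N) (c : A) (x : Q) :
    autQuot ψ N h c (x : Q ⧸ N) = (ψ c x : Q ⧸ N) := rfl

end Aux

section Lift
variable {p : ℕ} {A Q : Type*} [Group A] [Group Q] [Finite Q]

lemma exists_fixed_in_coset (hp : p.Prime) (hcop : Nat.Coprime (Nat.card Q) p)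
    (ψ : A →* MulAut Q) (N : Subgroup Q)
    (hNinv : ∀ (c : A), ∀ x ∈ N, ψ c x ∈ N) (c : A) (hc : c ^ p = 1)
    (q : Q) (hq : q⁻¹ * ψ c q ∈ N) :
    ∃ q', ψ c q' = q' ∧ q⁻¹ * q' ∈ N := by
  classical
  haveI : Fact p.Prime := ⟨hp⟩
  set S := {x : Q // q⁻¹ * x ∈ N} with hS
  haveI : Fintype S := Fintype.ofFinite S
  have hmem : ∀ x : Q, q⁻¹ * x ∈ N → q⁻¹ * ψ c x ∈ N := by
    intro x hx
    have h1 : (q⁻¹ * ψ c q) * ((ψ c q)⁻¹ * ψ c x) = q⁻¹ * ψ c x := by group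
    rw [← h1]
    refine N.mul_mem hq ?_
    have : (ψ c q)⁻¹ * ψ c x = ψ c (q⁻¹ * x) := by
      simp [map_mul]
    rw [this]; exact hNinv c _ hx
  have hmem' : ∀ x : Q, q⁻¹ * x ∈ N → q⁻¹ * ψ c⁻¹ x ∈ N := by
    intro x hx
    have hq' : q⁻¹ * ψ c⁻¹ q ∈ N := by
      have := hNinv c⁻¹ _ hq
      rw [map_mul, map_inv] at this
      have := N.inv_mem this
      simpa [mul_inv_rev] using this
    have h1 : (q⁻¹ * ψ c⁻¹ q) * ((ψ c⁻¹ q)⁻¹ * ψ c⁻¹ x) = q⁻¹ * ψ c⁻¹ x := by group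
    rw [← h1]
    refine N.mul_mem hq' ?_
    have : (ψ c⁻¹ q)⁻¹ * ψ c⁻¹ x = ψ c⁻¹ (q⁻¹ * x) := by simp [map_mul]
    rw [this]; exact hNinv c⁻¹ _ hx
  set σ : Equiv.Perm S :=
    { toFun := fun x => ⟨ψ c x, hmem x x.2⟩
      invFun := fun x => ⟨ψ c⁻¹ x, hmem' x x.2⟩
      left_inv := fun x => Subtype.ext (show ψ c⁻¹ (ψ c x) = x by
        rw [← MulAut.mul_apply, ← map_mul, inv_mul_cancel, map_one, MulAut.one_apply])
      right_inv := fun x => Subtype.ext (show ψ c (ψ c⁻¹ x) = x by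
        rw [← MulAut.mul_apply, ← map_mul, mul_inv_cancel, map_one, MulAut.one_apply]) }
    with hσ
  have hpow : ∀ (n : ℕ) (x : S), ((σ ^ n) x : Q) = ψ (c ^ n) x := by
    intro n
    induction n with
    | zero => intro x; simp
    | succ n ih =>
      intro x
      rw [pow_succ, Equiv.Perm.mul_apply]
      have := ih (σ x)
      rw [this]
      show (ψ (c ^ n)) (ψ c x) = _
      rw [← MulAut.mul_apply, ← map_mul, ← pow_succ]
  have hσp : σ ^ p ^ 1 = 1 := by
    rw [pow_one]
    ext x
    rw [hpow p x, hc, map_one]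
    rfl
  have hcard : ¬ p ∣ Fintype.card S := by
    have he : Nat.card S = Nat.card N := Nat.card_eq_of_bijective
      (fun x : S => (⟨q⁻¹ * x.1, x.2⟩ : N))
      ⟨fun x y hxy => Subtype.ext (by
          have : q⁻¹ * x.1 = q⁻¹ * y.1 := congrArg Subtype.val hxy
          exact mul_left_cancel this),
       fun n => ⟨⟨q * n.1, by simpa using n.2⟩, Subtype.ext (by simp)⟩⟩
    rw [← Nat.card_eq_fintype_card, he]
    intro hdvd
    have h2 : p ∣ Nat.card Q := hdvd.trans (Subgroup.card_subgroup_dvd_card N)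
    have : p ∣ Nat.gcd (Nat.card Q) p := Nat.dvd_gcd h2 dvd_rfl
    rw [Nat.Coprime] at hcop
    rw [hcop] at this
    exact hp.one_lt.ne' (Nat.dvd_one.mp this)
  obtain ⟨x, hx⟩ := Equiv.Perm.exists_fixed_point_of_prime hcard hσp
  exact ⟨x.1, congrArg Subtype.val hx, x.2⟩
end Lift

section FPF
variable {p : ℕ} {A : Type*} [CommGroup A]

lemma pow_eq_of_modEq {M : Type*} [Group M] {x : M} {p m n : ℕ} (hx : x ^ p = 1)
    (h : m ≡ n [MOD p]) : x ^ m = x ^ n := by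
  have hd : orderOf x ∣ p := orderOf_dvd_of_pow_eq_one hx
  exact pow_eq_pow_iff_modEq.mpr (h.of_dvd hd)

lemma pow_val_add {M : Type*} [Group M] {x : M} {p : ℕ} [NeZero p] (hx : x ^ p = 1)
    (i j : ZMod p) : x ^ (i + j).val = x ^ i.val * x ^ j.val := by
  rw [← pow_add]
  refine pow_eq_of_modEq hx ?_
  rw [ZMod.val_add]
  exact Nat.mod_modEq _ _

lemma pow_val_mul {M : Type*} [Group M] {x : M} {p : ℕ} [NeZero p] (hx : x ^ p = 1)
    (i j : ZMod p) : x ^ (i * j).val = x ^ (i.val * j.val) := by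
  refine pow_eq_of_modEq hx ?_
  rw [ZMod.val_mul]
  exact Nat.mod_modEq _ _

lemma fpf_trivial (hp : p.Prime) {W : Type*} [CommGroup W] [Finite W]
    (hcop : Nat.Coprime (Nat.card W) p)
    (hexp : ∀ c : A, c ^ p = 1)
    {a b : A} (hb : b ≠ 1) (hab : a ∉ Subgroup.zpowers b)
    (ψ : A →* MulAut W)
    (hfpf : ∀ c : A, c ≠ 1 → ∀ w : W, ψ c w = w → w = 1)
    (w : W) : w = 1 := by
  classical
  haveI : Fact p.Prime := ⟨hp⟩
  haveI : NeZero p := ⟨hp.pos.ne'⟩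
  set F : ZMod p → ZMod p → W := fun i j => ψ (a ^ i.val * b ^ j.val) w with hF
  -- each "row product" is fixed by b, hence trivial
  have hrow : ∀ i : ZMod p, (∏ j : ZMod p, F i j) = 1 := by
    intro i
    refine hfpf b hb _ ?_
    rw [map_prod]
    have key : ∀ j : ZMod p, ψ b (F i j) = F i (j + 1) := by
      intro j
      show ψ b (ψ (a ^ i.val * b ^ j.val) w) = ψ (a ^ i.val * b ^ (j + 1).val) w
      rw [← MulAut.mul_apply, ← map_mul]
      congr 2
      rw [pow_val_add (hexp b) j 1, ZMod.val_one]
      simp [mul_comm, mul_assoc, mul_left_comm, pow_succ]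
    calc (∏ j : ZMod p, ψ b (F i j)) = ∏ j : ZMod p, F i (j + 1) := by
          exact Finset.prod_congr rfl fun j _ => key j
      _ = ∏ j : ZMod p, F i j := Equiv.prod_comp (Equiv.addRight (1 : ZMod p)) (F i)
  -- the "norm" along each of the subgroups ⟨a * b^j⟩ is trivial
  have hcol : ∀ j : ZMod p, (∏ i : ZMod p, F i (j * i)) = 1 := by
    intro j
    set c : A := a * b ^ j.val with hc
    have hcne : c ≠ 1 := by
      intro h
      apply hab
      have : a = (b ^ j.val)⁻¹ := by
        rw [eq_inv_iff_mul_eq_one]; exact h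
      rw [this]
      exact Subgroup.inv_mem _ (Subgroup.pow_mem _ (Subgroup.mem_zpowers b) _)
    have hexpand : ∀ i : ZMod p, ψ (c ^ i.val) w = F i (j * i) := by
      intro i
      have : c ^ i.val = a ^ i.val * b ^ (j * i).val := by
        rw [hc, mul_pow, ← pow_mul, pow_val_mul (hexp b) j i]
      rw [this]
    have hfix : ψ c (∏ i : ZMod p, ψ (c ^ i.val) w) = ∏ i : ZMod p, ψ (c ^ i.val) w := by
      rw [map_prod]
      have key : ∀ i : ZMod p, ψ c (ψ (c ^ i.val) w) = ψ (c ^ (i + 1).val) w := by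
        intro i
        rw [← MulAut.mul_apply, ← map_mul]
        congr 2
        rw [pow_val_add (hexp c) i 1, ZMod.val_one, pow_one, mul_comm]
      calc (∏ i : ZMod p, ψ c (ψ (c ^ i.val) w))
          = ∏ i : ZMod p, ψ (c ^ (i + 1).val) w := Finset.prod_congr rfl fun i _ => key i
        _ = ∏ i : ZMod p, ψ (c ^ i.val) w :=
            Equiv.prod_comp (Equiv.addRight (1 : ZMod p)) (fun i : ZMod p => ψ (c ^ i.val) w)
    have := hfpf c hcne _ hfix
    calc (∏ i : ZMod p, F i (j * i)) = ∏ i : ZMod p, ψ (c ^ i.val) w :=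
          Finset.prod_congr rfl fun i _ => (hexpand i).symm
      _ = 1 := this
  -- combine: w ^ p = 1
  have hwp : w ^ p = 1 := by
    have h1 : (∏ j : ZMod p, ∏ i : ZMod p, F i (j * i)) = 1 :=
      Finset.prod_eq_one fun j _ => hcol j
    rw [Finset.prod_comm] at h1
    -- now ∏ i, ∏ j, F i (j * i) = 1
    have h2 : ∀ i : ZMod p, i ≠ 0 → (∏ j : ZMod p, F i (j * i)) = 1 := by
      intro i hi
      have : (∏ j : ZMod p, F i (j * i)) = ∏ j : ZMod p, F i j := by
        exact Equiv.prod_comp (Equiv.mulRight₀ i hi) (fun j => F i j)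
      rw [this]; exact hrow i
    have h0 : (∏ j : ZMod p, F 0 (j * 0)) = w ^ p := by
      have : ∀ j : ZMod p, F 0 (j * 0) = w := by
        intro j
        show ψ (a ^ (0 : ZMod p).val * b ^ (j * 0).val) w = w
        simp
      rw [Finset.prod_congr rfl fun j _ => this j, Finset.prod_const, Finset.card_univ,
        ZMod.card p]
    rw [Fintype.prod_eq_single 0 h2, h0] at h1
    exact h1
  have hdvd : orderOf w ∣ p := orderOf_dvd_of_pow_eq_one hwp
  have hdvd2 : orderOf w ∣ Nat.card W := orderOf_dvd_natCard w
  have : orderOf w ∣ 1 := by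
    rw [← hcop]; exact Nat.dvd_gcd hdvd2 hdvd
  exact orderOf_eq_one_iff.mp (Nat.dvd_one.mp this)
end FPF

section Abelian
variable {p : ℕ} {A : Type*} [CommGroup A]

lemma abelian_gen (hp : p.Prime) {V : Type*} [CommGroup V] [Finite V]
    (hcop : Nat.Coprime (Nat.card V) p) (hexp : ∀ c : A, c ^ p = 1)
    {a b : A} (hb : b ≠ 1) (hab : a ∉ Subgroup.zpowers b)
    (ψ : A →* MulAut V) :
    closure {v : V | ∃ c : A, c ≠ 1 ∧ ψ c v = v} = ⊤ := by
  classical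
  set S : Set V := {v : V | ∃ c : A, c ≠ 1 ∧ ψ c v = v} with hSdef
  set H : Subgroup V := closure S with hHdef
  have hinv : ∀ (c : A), ∀ x ∈ H, ψ c x ∈ H := by
    intro c x hx
    have hmap : H.map (ψ c).toMonoidHom ≤ H := by
      rw [hHdef, MonoidHom.map_closure]
      refine closure_le _ |>.mpr ?_
      rintro _ ⟨v, ⟨d, hd, hdv⟩, rfl⟩
      refine subset_closure ⟨d, hd, ?_⟩
      show ψ d (ψ c v) = ψ c v
      rw [← MulAut.mul_apply, ← map_mul, mul_comm, map_mul, MulAut.mul_apply, hdv]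
    exact hmap ⟨x, hx, rfl⟩
  haveI : H.Normal := inferInstance
  set ψ' := autQuot ψ H hinv with hψ'
  have hfpf' : ∀ c : A, c ≠ 1 → ∀ x : V ⧸ H, ψ' c x = x → x = 1 := by
    intro c hc x
    induction x using QuotientGroup.induction_on with
    | _ v =>
      intro hfix
      rw [hψ', autQuot_apply] at hfix
      have hm : v⁻¹ * ψ c v ∈ H := by
        rw [← QuotientGroup.eq]
        exact hfix.symm
      obtain ⟨v', hv'fix, hv'⟩ := exists_fixed_in_coset hp hcop ψ H hinv c (hexp c) v hm
      have hv'S : v' ∈ H := subset_closure ⟨c, hc, hv'fix⟩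
      have : v ∈ H := by
        have := H.mul_mem hv'S (H.inv_mem hv')
        simpa [mul_assoc] using (by
          have h2 : v' * (v⁻¹ * v')⁻¹ = v := by group
          rw [h2] at this; exact this)
      rw [QuotientGroup.eq_one_iff]
      exact this
  have hcop' : Nat.Coprime (Nat.card (V ⧸ H)) p :=
    Nat.Coprime.coprime_dvd_left (Subgroup.card_quotient_dvd_card H) hcop
  have hall : ∀ w : V ⧸ H, w = 1 := fpf_trivial hp hcop' hexp hb hab ψ' hfpf'
  rw [eq_top_iff]
  intro x _
  have := hall (x : V ⧸ H)
  rwa [QuotientGroup.eq_one_iff] at this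
end Abelian

section PGroupCase
variable {p : ℕ} {A : Type*} [CommGroup A]

lemma pgroup_gen_aux (hp : p.Prime) (hexp : ∀ c : A, c ^ p = 1)
    {a b : A} (hb : b ≠ 1) (hab : a ∉ Subgroup.zpowers b) (n : ℕ) :
    ∀ {q : ℕ}, q.Prime → ∀ {Q : Type u} [Group Q] [Finite Q], Nat.card Q ≤ n →
      IsPGroup q Q → Nat.Coprime (Nat.card Q) p →
      ∀ ψ : A →* MulAut Q, closure {x : Q | ∃ c : A, c ≠ 1 ∧ ψ c x = x} = ⊤ := by
  induction n with
  | zero =>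
    intro q hq Q _ _ hn _ _ _
    exact absurd (Nat.card_pos (α := Q)) (by omega)
  | succ n ih =>
    intro q hq Q _ _ hn hQ hcop ψ
    by_cases hs : Subsingleton Q
    · rw [eq_top_iff]
      intro x _
      rw [Subsingleton.elim x 1]
      exact Subgroup.one_mem _
    haveI : Nontrivial Q := not_subsingleton_iff_nontrivial.mp hs
    haveI : Fact q.Prime := ⟨hq⟩
    haveI hZnt : Nontrivial (Subgroup.center Q) := hQ.center_nontrivial
    set Z := Subgroup.center Q with hZ
    set S : Set Q := {x : Q | ∃ c : A, c ≠ 1 ∧ ψ c x = x} with hSdef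
    set H : Subgroup Q := closure S with hHdef
    have hZinv : ∀ (c : A), ∀ x ∈ Z, ψ c x ∈ Z := by
      intro c x hx
      rw [hZ, Subgroup.mem_center_iff]
      intro g
      have hg : ψ c (ψ c⁻¹ g) = g := by
        rw [← MulAut.mul_apply, ← map_mul, mul_inv_cancel, map_one, MulAut.one_apply]
      have hx' := Subgroup.mem_center_iff.mp hx (ψ c⁻¹ g)
      calc g * ψ c x = ψ c (ψ c⁻¹ g) * ψ c x := by rw [hg]
        _ = ψ c (ψ c⁻¹ g * x) := by rw [map_mul]
        _ = ψ c (x * ψ c⁻¹ g) := by rw [hx']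
        _ = ψ c x * ψ c (ψ c⁻¹ g) := by rw [map_mul]
        _ = ψ c x * g := by rw [hg]
    -- quotient by the center is smaller
    have hlt : Nat.card (Q ⧸ Z) < Nat.card Q := by
      rw [Subgroup.card_eq_card_quotient_mul_card_subgroup Z]
      have h1 : 1 < Nat.card Z := Finite.one_lt_card
      have h2 : 0 < Nat.card (Q ⧸ Z) := Nat.card_pos
      nlinarith
    have hn' : Nat.card (Q ⧸ Z) ≤ n := by omega
    have hcop' : Nat.Coprime (Nat.card (Q ⧸ Z)) p :=
      Nat.Coprime.coprime_dvd_left (Subgroup.card_quotient_dvd_card Z) hcop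
    set ψ' := autQuot ψ Z hZinv with hψ'
    have htop := ih hq hn' (IsPGroup.to_quotient hQ Z) hcop' ψ'
    -- lift: the image of H in the quotient is everything
    have hmap : H.map (QuotientGroup.mk' Z) = ⊤ := by
      rw [eq_top_iff, ← htop]
      refine closure_le _ |>.mpr ?_
      rintro x ⟨c, hc, hfix⟩
      induction x using QuotientGroup.induction_on with
      | _ v =>
        rw [hψ', autQuot_apply] at hfix
        have hm : v⁻¹ * ψ c v ∈ Z := by
          rw [← QuotientGroup.eq]
          exact hfix.symm
        obtain ⟨v', hv'fix, hv'⟩ := exists_fixed_in_coset hp hcop ψ Z hZinv c (hexp c) v hm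
        refine ⟨v', subset_closure ⟨c, hc, hv'fix⟩, ?_⟩
        show (v' : Q ⧸ Z) = (v : Q ⧸ Z)
        rw [QuotientGroup.eq]
        have := Z.inv_mem hv'
        simpa [mul_inv_rev] using this
    have hsup : H ⊔ Z = ⊤ := by
      rw [eq_top_iff]
      intro x _
      have hx : (QuotientGroup.mk' Z) x ∈ H.map (QuotientGroup.mk' Z) := by
        rw [hmap]; trivial
      obtain ⟨h, hh, hhx⟩ := hx
      have hz : h⁻¹ * x ∈ Z := by
        rw [← QuotientGroup.eq]
        exact hhx
      have : x = h * (h⁻¹ * x) := by group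
      rw [this]
      exact Subgroup.mul_mem _ (Subgroup.mem_sup_left hh) (Subgroup.mem_sup_right hz)
    -- the center is inside H, by the abelian case
    have hZH : Z ≤ H := by
      set ψZ := autRestrict ψ Z hZinv with hψZ
      have hcopZ : Nat.Coprime (Nat.card Z) p :=
        Nat.Coprime.coprime_dvd_left (Subgroup.card_subgroup_dvd_card Z) hcop
      have habel := open scoped IsMulCommutative in abelian_gen hp hcopZ hexp hb hab ψZ
      intro z hz
      have hmem : (⟨z, hz⟩ : Z) ∈ closure {v : Z | ∃ c : A, c ≠ 1 ∧ ψZ c v = v} := by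
        rw [habel]; trivial
      have : z ∈ (closure {v : Z | ∃ c : A, c ≠ 1 ∧ ψZ c v = v}).map Z.subtype :=
        ⟨⟨z, hz⟩, hmem, rfl⟩
      rw [MonoidHom.map_closure] at this
      refine closure_le H |>.mpr ?_ this
      rintro _ ⟨⟨v, hv⟩, ⟨c, hc, hfix⟩, rfl⟩
      refine subset_closure ⟨c, hc, ?_⟩
      show ψ c v = v
      have := congrArg Subtype.val hfix
      rwa [autRestrict_apply] at this
    rw [← top_le_iff, ← hsup, sup_le_iff]
    exact ⟨le_refl H, hZH⟩
end PGroupCase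

section Pair
lemma exists_pair {p : ℕ} (hp : p.Prime) {A : Type*} [CommGroup A] [Finite A]
    (hA : Nat.card A = p ^ 2) (hexp : ∀ c : A, c ^ p = 1) :
    ∃ a b : A, b ≠ 1 ∧ a ∉ Subgroup.zpowers b := by
  have h1 : 1 < Nat.card A := by
    rw [hA]
    exact one_lt_pow₀ hp.one_lt (by norm_num)
  haveI : Nontrivial A := Finite.one_lt_card_iff_nontrivial.mp h1
  obtain ⟨b, hb⟩ := exists_ne (1 : A)
  have horder : orderOf b = p := by
    have hd : orderOf b ∣ p := orderOf_dvd_of_pow_eq_one (hexp b)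
    rcases hp.eq_one_or_self_of_dvd _ hd with h | h
    · exact absurd (orderOf_eq_one_iff.mp h) hb
    · exact h
  have hcard : Nat.card (Subgroup.zpowers b) = p := by rw [Nat.card_zpowers, horder]
  obtain ⟨a, ha⟩ : ∃ a : A, a ∉ Subgroup.zpowers b := by
    by_contra h
    push_neg at h
    have htop : Subgroup.zpowers b = ⊤ := by
      rw [eq_top_iff]; intro x _; exact h x
    rw [htop] at hcard
    rw [Subgroup.card_top, hA] at hcard
    nlinarith [hp.one_lt]
  exact ⟨a, b, hb, ha⟩
end Pair


/-- Coprime action of an elementary abelian group `A` of order `p²` on a finite group `R`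
of order prime to `p`: `R` is generated by the fixed points of the nontrivial elements
of `A`. -/
theorem coprime_action_generation {p : ℕ} (hp : p.Prime)
    {A R : Type*} [CommGroup A] [Group R] [Finite R]
    (hA : Nat.card A = p ^ 2) (hexp : ∀ a : A, a ^ p = 1)
    (hcop : Nat.Coprime (Nat.card R) p)
    (φ : A →* MulAut R) :
    Subgroup.closure {r : R | ∃ a : A, a ≠ 1 ∧ φ a r = r} = ⊤ := by
  classical
  haveI : Fact p.Prime := ⟨hp⟩
  haveI : Finite A := Nat.finite_of_card_ne_zero (by rw [hA]; exact (pow_pos hp.pos 2).ne')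
  obtain ⟨a, b, hb, hab⟩ := exists_pair hp hA hexp
  set S : Set R := {r : R | ∃ a : A, a ≠ 1 ∧ φ a r = r} with hSdef
  set H : Subgroup R := closure S with hHdef
  have hpR : ¬ p ∣ Nat.card R := by
    intro hd
    have : p ∣ Nat.gcd (Nat.card R) p := Nat.dvd_gcd hd dvd_rfl
    rw [Nat.Coprime] at hcop
    rw [hcop] at this
    exact hp.one_lt.ne' (Nat.dvd_one.mp this)
  have key : ∀ q : ℕ, q.Prime → ¬ q ∣ H.index := by
    intro q hq hdvd
    haveI : Fact q.Prime := ⟨hq⟩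
    letI : MulDistribMulAction A R := MulDistribMulAction.compHom R φ
    have hApgrp : IsPGroup p A := fun c => ⟨1, by rw [pow_one]; exact hexp c⟩
    obtain ⟨P₀⟩ := (inferInstance : Nonempty (Sylow q R))
    have hpcard : ¬ p ∣ Nat.card (Sylow q R) := by
      intro hd
      exact hpR (hd.trans ((P₀.card_dvd_index).trans (Subgroup.index_dvd_card (P₀ : Subgroup R))))
    obtain ⟨P, hP⟩ := hApgrp.nonempty_fixed_point_of_prime_not_dvd_card (Sylow q R) hpcard
    have hPfix : ∀ c : A, c • P = P := fun c => hP c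
    have hPinv : ∀ (c : A), ∀ x ∈ (P : Subgroup R), φ c x ∈ (P : Subgroup R) := by
      intro c x hx
      have h1 : c • x ∈ c • (P : Subgroup R) :=
        Subgroup.smul_mem_pointwise_smul x c (P : Subgroup R) hx
      rw [← Sylow.pointwise_smul_def, hPfix c] at h1
      exact h1
    have hcopP : Nat.Coprime (Nat.card ↥(P : Subgroup R)) p :=
      Nat.Coprime.coprime_dvd_left (Subgroup.card_subgroup_dvd_card _) hcop
    set ψP := autRestrict φ (P : Subgroup R) hPinv with hψP
    have htop := pgroup_gen_aux hp hexp hb hab (Nat.card ↥(P : Subgroup R)) hq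
      (le_refl _) P.2 hcopP ψP
    have hPH : (P : Subgroup R) ≤ H := by
      intro r hr
      have hmem : (⟨r, hr⟩ : ↥(P : Subgroup R)) ∈
          closure {v : ↥(P : Subgroup R) | ∃ c : A, c ≠ 1 ∧ ψP c v = v} := by
        rw [htop]; trivial
      have hmem2 : r ∈ (closure {v : ↥(P : Subgroup R) | ∃ c : A, c ≠ 1 ∧ ψP c v = v}).map
          (P : Subgroup R).subtype := ⟨⟨r, hr⟩, hmem, rfl⟩
      rw [MonoidHom.map_closure] at hmem2
      refine closure_le H |>.mpr ?_ hmem2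
      rintro _ ⟨⟨v, hv⟩, ⟨c, hc, hfix⟩, rfl⟩
      refine subset_closure ⟨c, hc, ?_⟩
      show φ c v = v
      have := congrArg Subtype.val hfix
      rwa [hψP, autRestrict_apply] at this
    have hdvd2 : H.index ∣ (P : Subgroup R).index := Subgroup.index_dvd_of_le hPH
    have hqP : ¬ q ∣ (P : Subgroup R).index := by
      refine P.not_dvd_index' ?_
      intro h0
      have : (P : Subgroup R).index ≠ 0 := Subgroup.index_ne_zero_of_finite
      exact this (Subgroup.relIndex_mul_index (Subgroup.le_normalizer (H := (P : Subgroup R))) ▸ (congrArg (· * _) h0).trans (zero_mul _))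
    exact hqP (hdvd.trans hdvd2)
  have hne : H.index ≠ 0 := Subgroup.index_ne_zero_of_finite
  have hone : H.index = 1 := by
    by_contra h
    obtain ⟨q, hq, hqd⟩ := Nat.exists_prime_and_dvd h
    exact key q hq hqd
  exact Subgroup.index_eq_one.mp hone
end

section
/- Let p be a prime, a ≥ 1, and let g be an element of GL_n(𝔽_p) of order p^a. Then n ≥ p^{a-1} + 1. -/
open Matrix

/-- If `g ∈ GL_n(𝔽_p)` has order `p^a` with `a ≥ 1`, then `n ≥ p^(a-1) + 1`. -/
theorem dim_lower_bound_of_order_pPow {p : ℕ} [Fact p.Prime] {a n : ℕ} (ha : 1 ≤ a)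
    (g : GL (Fin n) (ZMod p)) (hg : orderOf g = p ^ a) :
    p ^ (a - 1) + 1 ≤ n := by
  have hp : p.Prime := Fact.out
  by_contra h
  push_neg at h
  have hn : n ≤ p ^ (a - 1) := by omega
  rcases Nat.eq_zero_or_pos n with h0 | h0
  · subst h0
    have hg1 : g = 1 := Units.ext (Subsingleton.elim _ _)
    rw [hg1, orderOf_one] at hg
    have : 1 < p ^ a := Nat.one_lt_pow (by omega) hp.one_lt
    omega
  · haveI : Nonempty (Fin n) := Fin.pos_iff_nonempty.mp h0
    set M : Matrix (Fin n) (Fin n) (ZMod p) := (g : Matrix (Fin n) (Fin n) (ZMod p)) with hM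
    have hMa : M ^ (p ^ a) = 1 := by
      have h1 := pow_orderOf_eq_one g
      rw [hg] at h1
      calc M ^ (p ^ a)
          = ((g ^ (p ^ a) : GL (Fin n) (ZMod p)) : Matrix (Fin n) (Fin n) (ZMod p)) := by
            rw [Units.val_pow_eq_pow_val]
        _ = 1 := by rw [h1]; rfl
    have hnil : IsNilpotent (M - 1) := by
      refine ⟨p ^ a, ?_⟩
      rw [sub_pow_char_pow_of_commute p a (Commute.one_right M), hMa, one_pow, sub_self]
    -- a nilpotent n×n matrix has nilpotency index at most n
    have hcp : (M - 1).charpoly = Polynomial.X ^ n := by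
      have h1 := Matrix.isNilpotent_charpoly_sub_pow_of_isNilpotent hnil
      have h2 : (M - 1).charpoly - Polynomial.X ^ (Fintype.card (Fin n)) = 0 := h1.eq_zero
      rw [Fintype.card_fin] at h2
      exact sub_eq_zero.mp h2
    have hpow : (M - 1) ^ n = 0 := by
      have h1 := Matrix.aeval_self_charpoly (M - 1)
      rwa [hcp, map_pow, Polynomial.aeval_X] at h1
    have hpk : (M - 1) ^ (p ^ (a - 1)) = 0 := pow_eq_zero_of_le hn hpow
    have hMk : M ^ (p ^ (a - 1)) = 1 := by
      have h1 : ((M - 1) + 1) ^ (p ^ (a - 1))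
          = (M - 1) ^ (p ^ (a - 1)) + 1 ^ (p ^ (a - 1)) :=
        add_pow_char_pow_of_commute p (a - 1) (Commute.one_right _)
      rw [sub_add_cancel, hpk, one_pow, zero_add] at h1
      exact h1
    have hgk : g ^ (p ^ (a - 1)) = 1 := by
      ext : 1
      rw [Units.val_pow_eq_pow_val]
      exact hMk
    have hdvd : p ^ a ∣ p ^ (a - 1) := hg ▸ orderOf_dvd_of_pow_eq_one hgk
    have := (Nat.pow_dvd_pow_iff_le_right hp.one_lt).mp hdvd
    omega
end

section
/- Let p be a prime, H a finite group, T ∈ Syl_p(H), and K a subnormal subgroup of H with T ≤ K. Then the normal closure ⟨T^H⟩ of T in H is contained in K. -/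
/-- `K` is a subnormal subgroup of `G`: there is a chain `K = c 0 ⊴ c 1 ⊴ ⋯ ⊴ c n = G`
with each term normal in the next. -/
def IsSubnormal {G : Type*} [Group G] (K : Subgroup G) : Prop :=
  ∃ (n : ℕ) (c : ℕ → Subgroup G), c 0 = K ∧ c n = ⊤ ∧
    ∀ i < n, c i ≤ c (i + 1) ∧ ((c i).subgroupOf (c (i + 1))).Normal

/-- If `T` is a Sylow `p`-subgroup of the finite group `H` and `K` is a subnormal subgroup
of `H` containing `T`, then the normal closure `⟨T^H⟩` is contained in `K`. -/
theorem normalClosure_le_subnormal {p : ℕ} (hp : p.Prime) {H : Type*} [Group H] [Finite H]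
    (T : Sylow p H) (K : Subgroup H) (hK : IsSubnormal K) (hTK : (T : Subgroup H) ≤ K) :
    Subgroup.normalClosure ((T : Subgroup H) : Set H) ≤ K := by
  haveI : Fact p.Prime := ⟨hp⟩
  obtain ⟨n, c, hc0, hcn, hchain⟩ := hK
  -- T ≤ c i for all i ≤ n
  have hTc : ∀ i ≤ n, (T : Subgroup H) ≤ c i := by
    intro i hi
    induction i with
    | zero => rw [hc0]; exact hTK
    | succ j ih =>
      exact (ih (Nat.le_of_succ_le hi)).trans (hchain j (Nat.lt_of_succ_le hi)).1
  -- main claim by induction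
  have main : ∀ i ≤ n, ∀ g ∈ c i, ∀ t ∈ (T : Subgroup H), g * t * g⁻¹ ∈ K := by
    intro i
    induction i with
    | zero =>
      intro _ g hg t ht
      rw [hc0] at hg
      exact K.mul_mem (K.mul_mem hg (hTK ht)) (K.inv_mem hg)
    | succ j ih =>
      intro hj g hg t ht
      have hjn : j < n := Nat.lt_of_succ_le hj
      obtain ⟨hle, hnorm⟩ := hchain j hjn
      haveI := hnorm
      have hT1 : (T : Subgroup H) ≤ c (j + 1) := hTc (j + 1) hj
      have hTj : (T : Subgroup H) ≤ c j := hTc j (Nat.le_of_lt hjn)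
      set P : Sylow p (c (j + 1)) := T.subtype hT1 with hP
      have hPle : (P : Subgroup (c (j + 1))) ≤ (c j).subgroupOf (c (j + 1)) := by
        rw [hP, Sylow.coe_subtype]
        exact fun x hx => hTj hx
      have hfrat := Sylow.normalizer_sup_eq_top' P hPle
      have hgmem : (⟨g, hg⟩ : c (j + 1)) ∈
          ((c j).subgroupOf (c (j + 1)) ⊔ Subgroup.normalizer ((P : Subgroup (c (j + 1))) : Set (c (j + 1)))) := by
        rw [sup_comm, Sylow.coe_coe, hfrat]; trivial
      rw [← SetLike.mem_coe, Subgroup.normal_mul] at hgmem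
      obtain ⟨m, hm, u, hu, hmu⟩ := hgmem
      simp only [SetLike.mem_coe] at hm hu
      -- t as element of c (j+1)
      have htc : t ∈ c (j + 1) := hT1 ht
      have htP : (⟨t, htc⟩ : c (j + 1)) ∈ (P : Subgroup (c (j + 1))) := by
        rw [hP, Sylow.coe_subtype]; exact ht
      have hconj : u * ⟨t, htc⟩ * u⁻¹ ∈ (P : Subgroup (c (j + 1))) := by
        rw [Subgroup.mem_normalizer_iff] at hu
        exact (hu ⟨t, htc⟩).mp htP
      have hconj' : (u : H) * t * (u : H)⁻¹ ∈ (T : Subgroup H) := by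
        rw [hP, Sylow.coe_subtype, Subgroup.mem_subgroupOf] at hconj
        exact hconj
      have hmH : (m : H) ∈ c j := hm
      have hkey := ih (Nat.le_of_lt hjn) (m : H) hmH _ hconj'
      have hg_eq : g = (m : H) * (u : H) := by
        have h := congrArg Subtype.val hmu
        exact h.symm
      have : g * t * g⁻¹ =
          (m : H) * ((u : H) * t * (u : H)⁻¹) * (m : H)⁻¹ := by
        rw [hg_eq]; group
      rw [this]
      exact hkey
  -- conclude
  rw [Subgroup.normalClosure, Subgroup.closure_le]
  intro x hx
  rw [Group.mem_conjugatesOfSet_iff] at hx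
  obtain ⟨a, ha, hconj⟩ := hx
  obtain ⟨g, hg⟩ := isConj_iff.mp hconj
  have := main n le_rfl g (by rw [hcn]; trivial) a ha
  rw [hg] at this
  exact this
end

section
/- Let p be a prime, G a finite group, H ≤ G a subgroup satisfying H = ⟨T^H⟩ where T ∈ Syl_p(H). If K is any subnormal subgroup of G with T ≤ K, then H ≤ K. In particular, H is contained in the smallest subnormal subgroup of G containing T. -/
lemma aux_subgroupOf_normal {G : Type*} [Group G] {K L H' : Subgroup G}
    (hN : (K.subgroupOf L).Normal) (hHL : H' ≤ L) :
    (K.subgroupOf H').Normal := by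
  constructor
  intro n hn g
  have hn' : (⟨↑n, hHL n.2⟩ : L) ∈ K.subgroupOf L := hn
  have := hN.conj_mem _ hn' ⟨↑g, hHL g.2⟩
  simpa [Subgroup.mem_subgroupOf] using this

/-- Let `H ≤ G` with `H = ⟨T^H⟩` for a Sylow `p`-subgroup `T` of `H`. Then `H` is contained
in every subnormal subgroup of `G` containing `T`; in particular `H` is contained in the
smallest subnormal subgroup of `G` containing `T`. -/
theorem le_subnormal_of_normalClosure_eq_top {p : ℕ} (hp : p.Prime)
    {G : Type*} [Group G] [Finite G] (H : Subgroup G) (T : Sylow p H)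
    (hH : Subgroup.normalClosure ((T : Subgroup H) : Set H) = ⊤) :
    (∀ K : Subgroup G, IsSubnormal K → (T : Subgroup H).map H.subtype ≤ K → H ≤ K) ∧
    H ≤ ⨅ K ∈ {K : Subgroup G | IsSubnormal K ∧ (T : Subgroup H).map H.subtype ≤ K}, K := by
  have key : ∀ n (c : ℕ → Subgroup G), c n = ⊤ →
      (∀ i < n, c i ≤ c (i + 1) ∧ ((c i).subgroupOf (c (i + 1))).Normal) →
      (T : Subgroup H).map H.subtype ≤ c 0 → H ≤ c 0 := by
    intro n
    induction n with
    | zero => intro c hc _ _; rw [hc]; exact le_top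
    | succ n ih =>
      intro c hc hchain hT
      have h1 : H ≤ c 1 :=
        ih (fun i => c (i + 1)) hc (fun i hi => hchain (i + 1) (by omega))
          (le_trans hT (hchain 0 (by omega)).1)
      -- show H ≤ c 0 using normality of c 0 in c 1
      have hNorm : ((c 0).subgroupOf H).Normal :=
        aux_subgroupOf_normal (hchain 0 (by omega)).2 h1
      have hTle : ((T : Subgroup H) : Set H) ⊆ ((c 0).subgroupOf H : Set H) := by
        intro x hx
        exact hT ⟨x, hx, rfl⟩
      have : Subgroup.normalClosure ((T : Subgroup H) : Set H) ≤ (c 0).subgroupOf H :=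
        Subgroup.normalClosure_le_normal hTle
      rw [hH, top_le_iff, Subgroup.subgroupOf_eq_top] at this
      exact this
  refine ⟨fun K hK hTK => ?_, ?_⟩
  · obtain ⟨n, c, hc0, hcn, hchain⟩ := hK
    exact hc0 ▸ key n c hcn hchain (hc0 ▸ hTK)
  · refine le_iInf fun K => le_iInf fun hK => ?_
    obtain ⟨⟨n, c, hc0, hcn, hchain⟩, hTK⟩ := hK
    exact hc0 ▸ key n c hcn hchain (hc0 ▸ hTK)
end
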